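/- For every k > 0, the function g_k(p) = (p+k)²/(p(p-1)) - 2k·ln((1-p)/p) - 2·ln(1-p) attains its maximum over (0,1) at p = 1/2, where g_k(1/2) = -4(1/2 + k)² + 2·ln 2; consequently, g_k(p) ≤ 0 for all p ∈ (0,1) if and only if k ≥ √((ln 2)/2) - 1/2. -/

import Mathlib

/-- The auxiliary function `g_k(p) = (p+k)²/(p(p-1)) - 2k·ln((1-p)/p) - 2·ln(1-p)`. -/
noncomputable def gAux (k p : ℝ) : ℝ :=
  (p + k) ^ 2 / (p * (p - 1)) - 2 * k * Real.log ((1 - p) / p) - 2 * Real.log (1 - p)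

/-- A version of `gAux` with the quotient inside the log expanded. -/
noncomputable def fAux (k p : ℝ) : ℝ :=
  (p + k) ^ 2 / (p * (p - 1)) - 2 * k * (Real.log (1 - p) - Real.log p) - 2 * Real.log (1 - p)

lemma gAux_eq_fAux (k p : ℝ) (hp0 : 0 < p) (hp1 : p < 1) : gAux k p = fAux k p := by
  unfold gAux fAux
  rw [Real.log_div (by linarith) (by linarith)]

lemma hasDerivAt_fAux (k p : ℝ) (hp0 : 0 < p) (hp1 : p < 1) :
    HasDerivAt (fAux k) (-2 * (p - 1/2) * (p + k) ^ 2 / (p ^ 2 * (1 - p) ^ 2)) p := by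
  have hpne : p ≠ 0 := ne_of_gt hp0
  have h1p : (1 : ℝ) - p ≠ 0 := by linarith
  have hden : p * (p - 1) ≠ 0 := by
    apply mul_ne_zero hpne; intro h; apply h1p; linarith [sub_eq_zero.mp h]
  have hnum : HasDerivAt (fun x : ℝ => (x + k) ^ 2) (2 * (p + k)) p := by
    have := ((hasDerivAt_id p).add_const k).pow 2
    exact this.congr_deriv (by norm_num)
  have hden' : HasDerivAt (fun x : ℝ => x * (x - 1)) (2 * p - 1) p := by
    have := (hasDerivAt_id p).mul ((hasDerivAt_id p).sub_const 1)
    exact this.congr_deriv (by simp only [id_eq]; ring)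
  have hdiv : HasDerivAt (fun x : ℝ => (x + k) ^ 2 / (x * (x - 1)))
      ((2 * (p + k) * (p * (p - 1)) - (p + k) ^ 2 * (2 * p - 1)) / (p * (p - 1)) ^ 2) p :=
    hnum.div hden' hden
  have hlog1 : HasDerivAt (fun x : ℝ => Real.log (1 - x)) (-(1 - p)⁻¹) p := by
    have h := (Real.hasDerivAt_log h1p).comp p
      ((hasDerivAt_const p (1 : ℝ)).sub (hasDerivAt_id p))
    exact h.congr_deriv (by ring)
  have hlogp : HasDerivAt Real.log p⁻¹ p := Real.hasDerivAt_log hpne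
  have hcomb := (hdiv.sub (((hlog1.sub hlogp).const_mul (2 * k)))).sub (hlog1.const_mul 2)
  refine hcomb.congr_deriv ?_
  have hp1' : p - 1 ≠ 0 := sub_ne_zero.mpr (ne_of_lt hp1)
  field_simp
  ring

lemma fAux_le_half (k : ℝ) (p : ℝ) (hp : p ∈ Set.Ioo (0 : ℝ) 1) :
    fAux k p ≤ fAux k (1 / 2) := by
  obtain ⟨hp0, hp1⟩ := hp
  have hdiff : ∀ x ∈ Set.Ioo (0 : ℝ) 1, HasDerivAt (fAux k)
      (-2 * (x - 1/2) * (x + k) ^ 2 / (x ^ 2 * (1 - x) ^ 2)) x :=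
    fun x hx => hasDerivAt_fAux k x hx.1 hx.2
  rcases le_or_gt p (1/2) with h | h
  · -- monotone on Ioc 0 (1/2)
    have hmono : MonotoneOn (fAux k) (Set.Ioc (0 : ℝ) (1/2)) := by
      apply monotoneOn_of_deriv_nonneg (convex_Ioc _ _)
      · intro x hx
        exact (hdiff x ⟨hx.1, by linarith [hx.2]⟩).continuousAt.continuousWithinAt
      · intro x hx
        rw [interior_Ioc] at hx
        exact (hdiff x ⟨hx.1, by linarith [hx.2]⟩).differentiableAt.differentiableWithinAt
      · intro x hx
        rw [interior_Ioc] at hx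
        rw [(hdiff x ⟨hx.1, by linarith [hx.2]⟩).deriv]
        apply div_nonneg
        · nlinarith [sq_nonneg (x + k), hx.2]
        · positivity
    exact hmono ⟨hp0, h⟩ ⟨by norm_num, le_refl _⟩ h
  · -- antitone on Ico (1/2) 1
    have hanti : AntitoneOn (fAux k) (Set.Ico (1/2 : ℝ) 1) := by
      apply antitoneOn_of_deriv_nonpos (convex_Ico _ _)
      · intro x hx
        exact (hdiff x ⟨by linarith [hx.1], hx.2⟩).continuousAt.continuousWithinAt
      · intro x hx
        rw [interior_Ico] at hx
        exact (hdiff x ⟨by linarith [hx.1], hx.2⟩).differentiableAt.differentiableWithinAt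
      · intro x hx
        rw [interior_Ico] at hx
        rw [(hdiff x ⟨by linarith [hx.1], hx.2⟩).deriv]
        apply div_nonpos_of_nonpos_of_nonneg
        · nlinarith [sq_nonneg (x + k), hx.1]
        · positivity
    exact hanti ⟨le_refl _, by norm_num⟩ ⟨le_of_lt h, hp1⟩ (le_of_lt h)

/-- For every k > 0, `g_k` attains its maximum over (0,1) at p = 1/2, where
`g_k(1/2) = -4(1/2 + k)² + 2·ln 2`; consequently `g_k(p) ≤ 0` for all p ∈ (0,1) if and
only if `k ≥ √((ln 2)/2) - 1/2`. -/
theorem gAux_max_and_sign (k : ℝ) (hk : 0 < k) :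
    (∀ p ∈ Set.Ioo (0 : ℝ) 1, gAux k p ≤ gAux k (1 / 2)) ∧
    gAux k (1 / 2) = -4 * (1 / 2 + k) ^ 2 + 2 * Real.log 2 ∧
    ((∀ p ∈ Set.Ioo (0 : ℝ) 1, gAux k p ≤ 0) ↔ Real.sqrt (Real.log 2 / 2) - 1 / 2 ≤ k) := by
  have hhalf : (1/2 : ℝ) ∈ Set.Ioo (0 : ℝ) 1 := by norm_num
  have hmax : ∀ p ∈ Set.Ioo (0 : ℝ) 1, gAux k p ≤ gAux k (1 / 2) := by
    intro p hp
    rw [gAux_eq_fAux k p hp.1 hp.2, gAux_eq_fAux k (1/2) (by norm_num) (by norm_num)]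
    exact fAux_le_half k p hp
  have hval : gAux k (1 / 2) = -4 * (1 / 2 + k) ^ 2 + 2 * Real.log 2 := by
    unfold gAux
    have h1 : ((1 : ℝ) - 1/2) / (1/2 : ℝ) = 1 := by norm_num
    have h2 : (1 : ℝ) - 1/2 = 2⁻¹ := by norm_num
    rw [h1, Real.log_one, h2, Real.log_inv]
    ring
  refine ⟨hmax, hval, ?_⟩
  have hlog2 : (0 : ℝ) ≤ Real.log 2 := Real.log_nonneg (by norm_num)
  have hs := Real.sq_sqrt (show (0:ℝ) ≤ Real.log 2 / 2 by linarith)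
  have hsn := Real.sqrt_nonneg (Real.log 2 / 2)
  constructor
  · intro h
    have h0 := h (1/2) hhalf
    rw [hval] at h0
    -- log2/2 ≤ (1/2+k)^2, so sqrt(log2/2) ≤ 1/2+k
    have hsq : Real.log 2 / 2 ≤ (1/2 + k) ^ 2 := by nlinarith
    have := Real.sqrt_le_sqrt hsq
    rw [Real.sqrt_sq (by linarith)] at this
    linarith
  · intro h p hp
    have h0 : gAux k (1/2) ≤ 0 := by
      rw [hval]
      nlinarith [sq_nonneg (Real.sqrt (Real.log 2 / 2) - (1/2 + k))]
    linarith [hmax p hp]
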